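/- Let G = (V,E) be a connected undirected graph on {1,...,n} whose identity labeling is a valid DFS numbering (equivalently, G has no conflicting pair). Suppose {u,v} ∈ E with u < p(v) < v. Then the graph G' = (V, E \ {{u,v}}) is still connected and its identity labeling is still a valid DFS numbering (G' has no conflicting pair). -/

import Mathlib

open Classical

/-- `adj` is (the adjacency relation of) a simple undirected graph on vertex set `{1,…,n}`. -/
def IsGraphOn (n : ℕ) (adj : ℕ → ℕ → Prop) : Prop :=
  Symmetric adj ∧ ∀ u v, adj u v → 1 ≤ u ∧ u ≤ n ∧ 1 ≤ v ∧ v ≤ n ∧ u ≠ v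

/-- `p(v)`: the largest neighbour of `v` that is smaller than `v`, and `0` if none exists
(`sSup ∅ = 0` in `ℕ`). -/
noncomputable def par (adj : ℕ → ℕ → Prop) (v : ℕ) : ℕ :=
  sSup {u | adj u v ∧ u < v}

/-- `(v, {u,w})` is a conflicting pair: `{u,w}` is an edge and `p(v) < u < v < w`. -/
def Conflict (adj : ℕ → ℕ → Prop) (v u w : ℕ) : Prop :=
  adj u w ∧ par adj v < u ∧ u < v ∧ v < w

/-- One step of a (nondeterministic) depth-first search.  The state consists of the list of
already discovered vertices, in order of discovery and together with the recorded (possibly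
virtual) parent from which each was discovered, and of the stack of active vertices
(the white path, top first). -/
inductive DFSStep (n : ℕ) (adj : ℕ → ℕ → Prop) :
    List (ℕ × ℕ) × List ℕ → List (ℕ × ℕ) × List ℕ → Prop
  | root (v : ℕ) (order : List (ℕ × ℕ)) (hv1 : 1 ≤ v) (hv2 : v ≤ n)
      (hnd : v ∉ order.map Prod.fst) :
      DFSStep n adj (order, []) (order ++ [(v, 0)], [v])
  | descend (v t : ℕ) (order : List (ℕ × ℕ)) (stack : List ℕ)
      (hadj : adj t v) (hnd : v ∉ order.map Prod.fst) :
      DFSStep n adj (order, t :: stack) (order ++ [(v, t)], v :: t :: stack)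
  | backtrack (t : ℕ) (order : List (ℕ × ℕ)) (stack : List ℕ)
      (hall : ∀ u, adj t u → u ∈ order.map Prod.fst) :
      DFSStep n adj (order, t :: stack) (order, stack)

/-- A complete DFS run discovering the vertices in the order given by the list `order`. -/
def DFSRun (n : ℕ) (adj : ℕ → ℕ → Prop) (order : List (ℕ × ℕ)) : Prop :=
  Relation.ReflTransGen (DFSStep n adj) ([], []) (order, [])

/-- The labelling `f` is a valid DFS numbering of the graph: some DFS run discovers the
vertices in the order of increasing labels `1, 2, …, n`. -/
def ValidDFSLabel (n : ℕ) (adj : ℕ → ℕ → Prop) (f : ℕ → ℕ) : Prop :=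
  ∃ order, DFSRun n adj order ∧ (order.map Prod.fst).map f = List.range' 1 n

/-- The identity labelling on `{1,…,n}` is a valid DFS numbering of the graph. -/
def ValidDFS (n : ℕ) (adj : ℕ → ℕ → Prop) : Prop :=
  ValidDFSLabel n adj id

/-- The graph is connected (on its vertex set `{1,…,n}`). -/
def ConnOn (n : ℕ) (adj : ℕ → ℕ → Prop) : Prop :=
  ∀ u v, 1 ≤ u → u ≤ n → 1 ≤ v → v ≤ n → Relation.ReflTransGen adj u v

/-- The degree of a vertex. -/
noncomputable def degree (adj : ℕ → ℕ → Prop) (v : ℕ) : ℕ :=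
  Set.ncard {u | adj u v}

/-- The size `|E △ E'|` of the symmetric difference of the edge sets of two graphs
(given by symmetric adjacency relations). -/
noncomputable def edgeDiff (a b : ℕ → ℕ → Prop) : ℕ :=
  Set.ncard {p : ℕ × ℕ | p.1 < p.2 ∧ ¬(a p.1 p.2 ↔ b p.1 p.2)}

/-- If `G` is connected, its identity labelling is a valid DFS numbering,
and `{u,v} ∈ E` with `u < p(v) < v`, then the graph obtained by deleting `{u,v}` is still
connected and its identity labelling is still a valid DFS numbering. -/

private lemma closed_reach {adj : ℕ → ℕ → Prop} {D : List ℕ}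
    (hcl : ∀ t ∈ D, ∀ w, adj t w → w ∈ D) {a b : ℕ} (h : Relation.ReflTransGen adj a b)
    (ha : a ∈ D) : b ∈ D := by
  induction h with
  | refl => exact ha
  | tail _ hstep ih => exact hcl _ ih _ hstep

private lemma prefix_eq_range' {l : List ℕ} {n : ℕ} (h : l <+: List.range' 1 n) :
    l = List.range' 1 l.length := by
  obtain ⟨t, ht⟩ := h
  obtain ⟨k, -, h1, -⟩ := List.range'_eq_append_iff.mp ht.symm
  have hk : l.length = k := by rw [h1]; simp
  rw [hk]; exact h1

private lemma run_invariant (n : ℕ) (adj : ℕ → ℕ → Prop) (hG : IsGraphOn n adj)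
    (hconn : ConnOn n adj) (u v : ℕ) (hadj : adj u v) (h1 : u < par adj v) (h2 : par adj v < v)
    (finalO : List (ℕ × ℕ)) (hfin : finalO.map Prod.fst = List.range' 1 n) :
    ∀ st, Relation.ReflTransGen (DFSStep n adj) ([], []) st →
      (List.Sublist st.2.reverse (st.1.map Prod.fst) ∧
        ∀ t ∈ st.1.map Prod.fst, t ∉ st.2 → ∀ w, adj t w → w ∈ st.1.map Prod.fst) ∧
      (st.1 <+: finalO →
        Relation.ReflTransGen
          (DFSStep n (fun a b => adj a b ∧ ¬((a = u ∧ b = v) ∨ (a = v ∧ b = u)))) ([], []) st ∧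
        ∀ a ∈ st.1.map Prod.fst, ∀ b ∈ st.1.map Prod.fst,
          Relation.ReflTransGen
            (fun a b => adj a b ∧ ¬((a = u ∧ b = v) ∨ (a = v ∧ b = u))) a b) := by
  intro st h
  induction h with
  | refl =>
      refine ⟨⟨by simp, by simp⟩, fun _ => ⟨Relation.ReflTransGen.refl, by simp⟩⟩
  | tail hab hbc ih =>
      cases hbc with
      | root w o hv1 hv2 hnd =>
          obtain ⟨⟨hsub, hcl⟩, hpre⟩ := ih
          refine ⟨⟨?_, ?_⟩, ?_⟩
          · simpa using List.sublist_append_right (o.map Prod.fst) [w]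
          · intro t ht hts w' hadj'
            simp only [List.map_append, List.mem_append] at ht ⊢
            rcases ht with ht | ht
            · exact Or.inl (hcl t ht (by simp) w' hadj')
            · simp at ht; subst ht; simp at hts
          · intro hpref
            have hpref' : o <+: finalO := (o.prefix_append _).trans hpref
            obtain ⟨hrun', hc⟩ := hpre hpref'
            rcases eq_or_ne o [] with rfl | ho
            · refine ⟨hrun'.tail (DFSStep.root w [] hv1 hv2 (by simp)), ?_⟩
              intro a ha b hb
              simp at ha hb; subst ha; subst hb; exact Relation.ReflTransGen.refl
            · exfalso
              have hcl' : ∀ t ∈ o.map Prod.fst, ∀ w', adj t w' → w' ∈ o.map Prod.fst :=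
                fun t ht => hcl t ht (by simp)
              have heq : o.map Prod.fst = List.range' 1 (o.map Prod.fst).length :=
                prefix_eq_range' (by rw [← hfin]; exact hpref'.map _)
              have hlen : (o.map Prod.fst).length ≠ 0 := by
                simpa using fun h => ho (List.eq_nil_of_length_eq_zero h)
              have h1mem : (1 : ℕ) ∈ o.map Prod.fst := by
                rw [heq]; exact List.mem_range'_1.mpr ⟨le_rfl, by omega⟩
              have : w ∈ o.map Prod.fst :=
                closed_reach hcl' (hconn 1 w le_rfl (le_trans hv1 hv2) hv1 hv2) h1mem
              exact hnd this
      | descend w t o stk hadjtw hnd =>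
          obtain ⟨⟨hsub, hcl⟩, hpre⟩ := ih
          have htmem : t ∈ o.map Prod.fst := hsub.subset (by simp)
          refine ⟨⟨?_, ?_⟩, ?_⟩
          · simpa using hsub.append (List.Sublist.refl [w])
          · intro t' ht' hts w' hadj'
            simp only [List.map_append, List.mem_append] at ht' ⊢
            rcases ht' with ht' | ht'
            · refine Or.inl (hcl t' ht' ?_ w' hadj')
              intro hmem
              exact hts (by simp [hmem])
            · simp at ht'; subst ht'; exact absurd (by simp) hts
          · intro hpref
            have hpref' : o <+: finalO := (o.prefix_append _).trans hpref
            obtain ⟨hrun', hc⟩ := hpre hpref'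
            -- identify the discovery order as an initial segment of 1..n
            have heq0 : o.map Prod.fst ++ [w] = List.range' 1 o.length ++ [1 + o.length] := by
              have hA : o.map Prod.fst ++ [w] = List.range' 1 (o.length + 1) := by
                have := prefix_eq_range' (l := (o ++ [(w, t)]).map Prod.fst)
                  (by rw [← hfin]; exact hpref.map _)
                simpa using this
              have hB : List.range' 1 (o.length + 1) = List.range' 1 o.length ++ [1 + o.length] := by
                rw [← List.range'_append_1 (s := 1) (m := o.length) (n := 1)]
                simp
              rw [hA, hB]
            obtain ⟨hmapeq, hweq⟩ := List.append_inj' heq0 rfl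
            have hweq' : w = 1 + o.length := by simpa using hweq
            have htlt : t < w := by
              rw [hmapeq] at htmem
              rw [List.mem_range'_1] at htmem
              omega
            have hadj't : (fun a b => adj a b ∧ ¬((a = u ∧ b = v) ∨ (a = v ∧ b = u))) t w := by
              refine ⟨hadjtw, ?_⟩
              rintro (⟨htu, hwv⟩ | ⟨htv, hwu⟩)
              · -- t = u, w = v : the parent of v would be ≤ u, contradiction
                have hparmem : adj (par adj v) v ∧ par adj v < v := by
                  have h := Nat.sSup_mem (s := {x | adj x v ∧ x < v})
                    ⟨u, ⟨hadj, lt_trans h1 h2⟩⟩ ⟨v, fun x hx => hx.2.le⟩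
                  exact h
                have hu1 : 1 ≤ u := (hG.2 u v hadj).1
                have hpmem : par adj v ∈ o.map Prod.fst := by
                  rw [hmapeq]
                  exact List.mem_range'_1.mpr ⟨by omega, by omega⟩
                have hpstack : par adj v ∈ t :: stk := by
                  by_contra hns
                  exact hnd (by rw [hwv]; exact hcl _ hpmem hns v hparmem.1)
                have hsub2 := hsub
                rw [hmapeq] at hsub2
                have hpair : List.Pairwise (· < ·) (stk.reverse ++ [t]) := by
                  have := List.Pairwise.sublist hsub2 (List.pairwise_lt_range' (s := 1) (n := o.length))
                  simpa using this
                have hle : par adj v ≤ t := by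
                  rcases List.mem_cons.mp hpstack with hh | hh
                  · exact le_of_eq hh
                  · have hp2 := (List.pairwise_append.mp hpair).2.2
                    exact le_of_lt (hp2 _ (by simpa using hh) t (by simp))
                omega
              · omega
            refine ⟨hrun'.tail (DFSStep.descend w t o stk hadj't hnd), ?_⟩
            have hwt : Relation.ReflTransGen
                (fun a b => adj a b ∧ ¬((a = u ∧ b = v) ∨ (a = v ∧ b = u))) w t := by
              refine Relation.ReflTransGen.single ⟨hG.1 hadjtw, ?_⟩
              intro hh
              exact hadj't.2 (by tauto)
            have htw : Relation.ReflTransGen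
                (fun a b => adj a b ∧ ¬((a = u ∧ b = v) ∨ (a = v ∧ b = u))) t w :=
              Relation.ReflTransGen.single hadj't
            intro a ha b hb
            simp only [List.map_append, List.mem_append] at ha hb
            rcases ha with ha | ha <;> rcases hb with hb | hb
            · exact hc a ha b hb
            · simp at hb; subst hb; exact (hc a ha t htmem).trans htw
            · simp at ha; subst ha; exact hwt.trans (hc t htmem b hb)
            · simp at ha hb; subst ha; subst hb; exact Relation.ReflTransGen.refl
      | backtrack t o stk hall =>
          obtain ⟨⟨hsub, hcl⟩, hpre⟩ := ih
          refine ⟨⟨?_, ?_⟩, ?_⟩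
          · exact (List.sublist_append_left stk.reverse [t]).trans (by simpa using hsub)
          · intro t' ht' hts w' hadj'
            rcases eq_or_ne t' t with rfl | hne
            · exact hall w' hadj'
            · exact hcl t' ht' (by simp [hts, hne]) w' hadj'
          · intro hpref
            obtain ⟨hrun', hc⟩ := hpre hpref
            exact ⟨hrun'.tail (DFSStep.backtrack t o stk fun w' hw' => hall w' hw'.1), hc⟩

theorem remove_back_edge (n : ℕ) (adj : ℕ → ℕ → Prop) (hG : IsGraphOn n adj)
    (hconn : ConnOn n adj) (hvalid : ValidDFS n adj)
    (u v : ℕ) (hadj : adj u v) (h1 : u < par adj v) (h2 : par adj v < v) :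
    let adj' : ℕ → ℕ → Prop := fun a b =>
      adj a b ∧ ¬((a = u ∧ b = v) ∨ (a = v ∧ b = u))
    ConnOn n adj' ∧ ValidDFS n adj' := by
  intro adj'
  obtain ⟨order, hrun, horder⟩ := hvalid
  have horder' : order.map Prod.fst = List.range' 1 n := by simpa using horder
  obtain ⟨-, hkey⟩ := run_invariant n adj hG hconn u v hadj h1 h2 order horder'
      (order, []) hrun
  obtain ⟨hrun', hc⟩ := hkey (List.prefix_refl _)
  constructor
  · intro a b ha1 ha2 hb1 hb2
    exact hc a (by rw [horder']; simp [List.mem_range'_1]; omega)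
      b (by rw [horder']; simp [List.mem_range'_1]; omega)
  · exact ⟨order, hrun', by simpa using horder'⟩
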